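/- Let T be a spanning forest of graph G maintained by GreedyCC, together with a union-find structure whose sets are the connected components of T. Suppose after constructing T, a sequence of edge insertions is processed by unioning endpoints, and every edge deletion processed deletes only non-forest edges (edges not in T). Then at any point, the union-find sets exactly equal the connected components of the current graph. -/

import Mathlib

open scoped Classical

private lemma eqvGen_congr {α : Type*} {r r' : α → α → Prop} (h : ∀ a b, r a b ↔ r' a b)
    (u v : α) : Relation.EqvGen r u v ↔ Relation.EqvGen r' u v :=
  ⟨Relation.EqvGen.mono (fun a b => (h a b).1) u v, Relation.EqvGen.mono (fun a b => (h a b).2) u v⟩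

private lemma eqvGen_le_of_equivalence {α : Type*} {r q : α → α → Prop} (hq : Equivalence q)
    (h : ∀ a b, r a b → q a b) {u v : α} (hr : Relation.EqvGen r u v) : q u v := by
  induction hr with
  | rel a b hab => exact h a b hab
  | refl a => exact hq.refl a
  | symm a b _ ih => exact hq.symm ih
  | trans a b c _ _ ih1 ih2 => exact hq.trans ih1 ih2

private lemma reachable_equiv {V : Type*} (G : SimpleGraph V) : Equivalence G.Reachable :=
  ⟨SimpleGraph.Reachable.refl, fun h => h.symm, fun h h' => h.trans h'⟩

private lemma reachable_union_single {V : Type*} (A : Set (Sym2 V)) (e : Sym2 V) (u v : V) :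
    (SimpleGraph.fromEdgeSet (A ∪ {e})).Reachable u v ↔
      Relation.EqvGen
        (fun a b => (SimpleGraph.fromEdgeSet A).Reachable a b ∨ s(a, b) = e) u v := by
  constructor
  · intro h
    rw [SimpleGraph.reachable_iff_reflTransGen] at h
    induction h with
    | refl => exact Relation.EqvGen.refl u
    | tail _ hadj ih =>
        rename_i b c _
        refine ih.trans _ _ _ (Relation.EqvGen.rel _ _ ?_)
        rw [SimpleGraph.fromEdgeSet_adj] at hadj
        obtain ⟨hm, hne⟩ := hadj
        rcases hm with hm | hm
        · exact Or.inl (SimpleGraph.Adj.reachable (by rw [SimpleGraph.fromEdgeSet_adj]; exact ⟨hm, hne⟩))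
        · exact Or.inr hm
  · intro h
    induction h with
    | rel a b hab =>
        rcases hab with hab | hab
        · exact hab.mono (SimpleGraph.fromEdgeSet_mono Set.subset_union_left)
        · by_cases hab' : a = b
          · subst hab'; exact SimpleGraph.Reachable.refl a
          · exact SimpleGraph.Adj.reachable
              (by rw [SimpleGraph.fromEdgeSet_adj]; exact ⟨Or.inr hab, hab'⟩)
    | refl a => exact SimpleGraph.Reachable.refl a
    | symm a b _ ih => exact ih.symm
    | trans a b c _ _ ih1 ih2 => exact ih1.trans ih2

/-- GreedyCC invariant. `T` is a spanning forest of the initial graph `G0` (same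
reachability), `D 0` is the union-find relation with sets the components of `T`.
The stream `op` interleaves insertions (`true`) and deletions (`false`):
an insertion `e` unions the endpoints' sets (equivalence closure) and, if it merged
two distinct components, is added to the maintained forest `F`; a deletion removes
only a non-forest edge (`e ∉ F k`) and leaves both the forest and the union-find
unchanged. Then at every point the union-find sets exactly equal the connected
components of the current graph `Gr k`. -/
theorem stmt15 {V : Type*} (Nn : ℕ)
    (op : Fin Nn → Sym2 V × Bool)
    (G0 T : Set (Sym2 V)) (hT : T ⊆ G0)
    (hspan : ∀ u v : V, (SimpleGraph.fromEdgeSet T).Reachable u v ↔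
      (SimpleGraph.fromEdgeSet G0).Reachable u v)
    (Gr : ℕ → Set (Sym2 V)) (hGr0 : Gr 0 = G0)
    (hGrIns : ∀ (k : ℕ) (hk : k < Nn), (op ⟨k, hk⟩).2 = true →
      Gr (k + 1) = Gr k ∪ {(op ⟨k, hk⟩).1})
    (hGrDel : ∀ (k : ℕ) (hk : k < Nn), (op ⟨k, hk⟩).2 = false →
      Gr (k + 1) = Gr k \ {(op ⟨k, hk⟩).1})
    (F : ℕ → Set (Sym2 V)) (hF0 : F 0 = T)
    (D : ℕ → V → V → Prop)
    (hD0 : ∀ u v, D 0 u v ↔ (SimpleGraph.fromEdgeSet T).Reachable u v)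
    (hDIns : ∀ (k : ℕ) (hk : k < Nn), (op ⟨k, hk⟩).2 = true → ∀ u v,
      D (k + 1) u v ↔ Relation.EqvGen
        (fun a b => D k a b ∨ s(a, b) = (op ⟨k, hk⟩).1) u v)
    (hFIns : ∀ (k : ℕ) (hk : k < Nn), (op ⟨k, hk⟩).2 = true →
      F (k + 1) =
        if ∀ a b : V, s(a, b) = (op ⟨k, hk⟩).1 → D k a b then F k
        else F k ∪ {(op ⟨k, hk⟩).1})
    (hDel : ∀ (k : ℕ) (hk : k < Nn), (op ⟨k, hk⟩).2 = false →
      (op ⟨k, hk⟩).1 ∉ F k ∧ F (k + 1) = F k ∧ (∀ u v, D (k + 1) u v ↔ D k u v))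
    (k : ℕ) (hk : k ≤ Nn) (u v : V) :
    D k u v ↔ (SimpleGraph.fromEdgeSet (Gr k)).Reachable u v := by
  suffices h : ∀ k, k ≤ Nn → F k ⊆ Gr k ∧
      (∀ u v, D k u v ↔ (SimpleGraph.fromEdgeSet (Gr k)).Reachable u v) ∧
      (∀ u v, (SimpleGraph.fromEdgeSet (F k)).Reachable u v ↔
        (SimpleGraph.fromEdgeSet (Gr k)).Reachable u v) by
    exact (h k hk).2.1 u v
  clear hk u v k
  intro k
  induction k with
  | zero =>
    intro _
    refine ⟨by rw [hF0, hGr0]; exact hT, ?_, ?_⟩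
    · intro u v; rw [hD0, hGr0, hspan]
    · intro u v; rw [hF0, hGr0, hspan]
  | succ k ih =>
    intro hk1
    have hk' : k < Nn := hk1
    obtain ⟨hsub, hDk, hFk⟩ := ih (le_of_lt hk')
    by_cases hb : (op ⟨k, hk'⟩).2 = true
    · -- insertion
      set e := (op ⟨k, hk'⟩).1 with he
      have hG := hGrIns k hk' hb
      have hDk1 := hDIns k hk' hb
      have hF1 := hFIns k hk' hb
      have hkey : ∀ u v, Relation.EqvGen (fun a b => D k a b ∨ s(a, b) = e) u v ↔
          (SimpleGraph.fromEdgeSet (Gr (k + 1))).Reachable u v := by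
        intro u v
        rw [hG, reachable_union_single]
        exact eqvGen_congr (fun a b => by rw [hDk]) u v
      refine ⟨?_, fun u v => (hDk1 u v).trans (hkey u v), ?_⟩
      · rw [hF1, hG]
        split
        · exact hsub.trans Set.subset_union_left
        · exact Set.union_subset_union hsub (le_refl _)
      · intro u v
        rw [hF1]
        split
        · rename_i hall
          constructor
          · intro h
            exact h.mono (SimpleGraph.fromEdgeSet_mono
              (hsub.trans (by rw [hG]; exact Set.subset_union_left)))
          · intro h
            rw [hG, reachable_union_single] at h
            refine eqvGen_le_of_equivalence (reachable_equiv _) ?_ h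
            intro a b hab
            rcases hab with hab | hab
            · exact (hFk a b).2 hab
            · exact (hFk a b).2 ((hDk a b).1 (hall a b hab))
        · rw [hG, reachable_union_single, reachable_union_single]
          exact eqvGen_congr (fun a b => by rw [hFk]) u v
    · -- deletion
      have hb' : (op ⟨k, hk'⟩).2 = false := by
        cases h : (op ⟨k, hk'⟩).2 with
        | true => exact absurd h hb
        | false => rfl
      set e := (op ⟨k, hk'⟩).1 with he
      have hG := hGrDel k hk' hb'
      obtain ⟨heF, hF1, hD1⟩ := hDel k hk' hb'
      have hsub' : F (k + 1) ⊆ Gr (k + 1) := by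
        rw [hF1, hG]
        intro x hx
        exact ⟨hsub hx, fun hxe => heF (by rwa [Set.mem_singleton_iff.mp hxe] at hx)⟩
      have hFG : ∀ u v, (SimpleGraph.fromEdgeSet (F (k + 1))).Reachable u v ↔
          (SimpleGraph.fromEdgeSet (Gr (k + 1))).Reachable u v := by
        intro u v
        constructor
        · intro h; exact h.mono (SimpleGraph.fromEdgeSet_mono hsub')
        · intro h
          have h2 : (SimpleGraph.fromEdgeSet (Gr k)).Reachable u v := by
            refine h.mono (SimpleGraph.fromEdgeSet_mono ?_)
            rw [hG]; exact Set.diff_subset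
          rw [hF1]
          exact (hFk u v).2 h2
      refine ⟨hsub', fun u v => ?_, hFG⟩
      rw [hD1 u v, hDk u v, ← hFk u v, ← hF1, hFG u v]
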